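/- Let n be a superabundant number with largest prime factor p ≥ 23. Then ∏_{q ≤ p, q prime} (1 − 1/q^{k_q+1}) > 1 − (1/log p)·(1 + 1.5/log p), where k_q is the exponent of q in n; consequently σ(n)/n > (1 − (1/log p)(1 + 1.5/log p)) · n/φ(n). -/

import Mathlib

open Real Finset

noncomputable section

/-- Sum of divisors of `n`. -/
def sigma1 (n : ℕ) : ℕ := n.divisors.sum id

/-- `n` is superabundant if `σ(n)/n > σ(m)/m` for all positive `m < n`. -/
def Superabundant (n : ℕ) : Prop :=
  0 < n ∧ ∀ m : ℕ, 0 < m → m < n → (sigma1 m : ℝ) / m < (sigma1 n : ℝ) / n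

/-- Robin's quotient `f(n) = σ(n)/(n log log n)`. -/
def robinF (n : ℕ) : ℝ := (sigma1 n : ℝ) / (n * Real.log (Real.log n))

/-- `n` is extremely abundant. -/
def ExtremelyAbundant (n : ℕ) : Prop :=
  n = 10080 ∨ (10080 < n ∧ ∀ m : ℕ, 10080 ≤ m → m < n → robinF m < robinF n)



lemma sigma1_mul {x y : ℕ} (h : x.Coprime y) : sigma1 (x * y) = sigma1 x * sigma1 y := by
  simpa [sigma1, Function.id_def] using h.sum_divisors_mul

lemma sigma1_primePow {q : ℕ} (hq : q.Prime) (e : ℕ) :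
    sigma1 (q ^ e) = ∑ i ∈ range (e + 1), q ^ i := by
  simpa [sigma1, Function.id_def] using
    Nat.sum_divisors_prime_pow (k := e) (f := (id : ℕ → ℕ)) hq

lemma sigma1_geom {q : ℕ} (hq : q.Prime) (e : ℕ) :
    (sigma1 (q ^ e) : ℝ) * ((q : ℝ) - 1) = (q : ℝ) ^ (e + 1) - 1 := by
  rw [sigma1_primePow hq]
  push_cast
  exact geom_sum_mul _ _

lemma sigma1_pos {x : ℕ} (hx : x ≠ 0) : 0 < sigma1 x := by
  have hm : x ∈ x.divisors := Nat.mem_divisors_self x hx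
  have h2 := Finset.single_le_sum (f := (id : ℕ → ℕ)) (fun i _ => Nat.zero_le i) hm
  have h3 : 0 < x := Nat.pos_of_ne_zero hx
  simp only [sigma1, id] at *
  omega

lemma sigma1_factorization (n : ℕ) (hn : n ≠ 0) :
    sigma1 n = ∏ q ∈ n.primeFactors, sigma1 (q ^ n.factorization q) := by
  have h := Nat.sum_divisors hn
  simp only [sigma1, Function.id_def]
  rw [h]
  exact Finset.prod_congr rfl fun q hq => by
    simpa [sigma1, Function.id_def] using
      (sigma1_primePow (Nat.prime_of_mem_primeFactors hq) (n.factorization q)).symm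


lemma core_ineq (A B P p : ℝ) (hB2 : 2 ≤ B) (hBA : B ≤ A) (hAp : A ≤ p - 1) (hPp : p ≤ P)
    (_hp3 : 3 ≤ p) :
    (P * p - 1) * (B - 1) * A ≤ (P - 1) * (A * B - 1) * p := by
  have h1 : 0 ≤ (P - p) * (p * (A - 1)) :=
    mul_nonneg (by linarith) (mul_nonneg (by linarith) (by linarith))
  have h2 : 0 ≤ (A - B) * (A * (p - 1)) :=
    mul_nonneg (by linarith) (mul_nonneg (by linarith) (by linarith))
  have h3 : 0 ≤ (p - A) * ((A - 1) * (p - 1)) :=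
    mul_nonneg (by linarith) (mul_nonneg (by linarith) (by linarith))
  nlinarith [h1, h2, h3]

set_option maxHeartbeats 1000000 in
lemma sab_exponent (n : ℕ) (hn : Superabundant n) (p : ℕ) (hp : p.Prime) (hpn : p ∣ n)
    (hp23 : 23 ≤ p) (q : ℕ) (hq : q.Prime) (hqp : q ≤ p) :
    p < q ^ (n.factorization q + 1) := by
  have hn0 : n ≠ 0 := hn.1.ne'
  by_contra hcon
  push_neg at hcon
  set k := n.factorization q with hk
  rcases eq_or_lt_of_le hqp with rfl | hqlt
  · have hk1 : 1 ≤ k := hq.factorization_pos_of_dvd hn0 hpn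
    have h2 : q * q ≤ q ^ (k + 1) := by
      rw [← pow_two]; exact Nat.pow_le_pow_right hq.pos (by omega)
    nlinarith [hq.two_le]
  · have hq1 : 1 < q := hq.one_lt
    set a := n.factorization p with ha
    have ha1 : 1 ≤ a := hp.factorization_pos_of_dvd hn0 hpn
    obtain ⟨b, hb⟩ : ∃ b, a = b + 1 := ⟨a - 1, by omega⟩
    set β := Nat.log q p with hβ
    have hβ1 : q ^ β ≤ p := Nat.pow_log_le_self q (by omega)
    have hkβ : k + 1 ≤ β := (Nat.le_log_iff_pow_le hq1 (by omega)).mpr hcon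
    have hβp : q ^ β < p := by
      rcases lt_or_eq_of_le hβ1 with h | h
      · exact h
      · exfalso
        have hq_dvd : q ∣ p := h ▸ dvd_pow_self q (by omega : β ≠ 0)
        exact absurd ((Nat.prime_dvd_prime_iff_eq hq hp).mp hq_dvd) hqlt.ne
    set t := ordCompl[p] n with ht
    have hnt : p ^ a * t = n := Nat.ordProj_mul_ordCompl_eq_self n p
    have hpt : ¬ p ∣ t := Nat.not_dvd_ordCompl hp hn0
    have ht0 : t ≠ 0 := (Nat.ordCompl_pos p hn0).ne'
    have htq : t.factorization q = k := by
      rw [ht, Nat.factorization_ordCompl n p]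
      exact Finsupp.erase_ne hqlt.ne
    set r := ordCompl[q] t with hr
    have htr : q ^ k * r = t := by rw [← htq]; exact Nat.ordProj_mul_ordCompl_eq_self t q
    have hqr : ¬ q ∣ r := Nat.not_dvd_ordCompl hq ht0
    have hr0 : r ≠ 0 := (Nat.ordCompl_pos q ht0).ne'
    have hpr : ¬ p ∣ r := fun h => hpt (h.trans (Nat.ordCompl_dvd t q))
    set m := p ^ b * (q ^ (k + β) * r) with hm
    have hnval : n = p ^ (b + 1) * (q ^ k * r) := by rw [htr, ← hb, hnt]
    have hm0 : 0 < m := by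
      rw [hm]
      exact Nat.mul_pos (Nat.pow_pos hp.pos)
        (Nat.mul_pos (Nat.pow_pos hq.pos) (Nat.pos_of_ne_zero hr0))
    have hmn : m < n := by
      rw [hnval, hm]
      have h1 : q ^ (k + β) * r < (q ^ k * p) * r := by
        apply Nat.mul_lt_mul_of_lt_of_le _ le_rfl (Nat.pos_of_ne_zero hr0)
        rw [pow_add]
        exact Nat.mul_lt_mul_of_le_of_lt le_rfl hβp (Nat.pow_pos hq.pos)
      calc p ^ b * (q ^ (k + β) * r) < p ^ b * ((q ^ k * p) * r) :=
            Nat.mul_lt_mul_of_le_of_lt le_rfl h1 (Nat.pow_pos hp.pos)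
        _ = p ^ (b + 1) * (q ^ k * r) := by ring
    -- coprimality
    have hcpq : Nat.Coprime p q := (Nat.coprime_primes hp hq).mpr hqlt.ne'
    have cpr : Nat.Coprime p r := hp.coprime_iff_not_dvd.mpr hpr
    have c1 : Nat.Coprime p (q ^ k * r) := (hcpq.pow_right k).mul_right cpr
    have c2 : Nat.Coprime p (q ^ (k + β) * r) := (hcpq.pow_right _).mul_right cpr
    have cqr : Nat.Coprime (q ^ k) r := (hq.coprime_iff_not_dvd.mpr hqr).pow_left k
    have cqr2 : Nat.Coprime (q ^ (k + β)) r := (hq.coprime_iff_not_dvd.mpr hqr).pow_left _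
    have hσn : sigma1 n = sigma1 (p ^ (b + 1)) * (sigma1 (q ^ k) * sigma1 r) := by
      rw [hnval, sigma1_mul (c1.pow_left (b + 1)), sigma1_mul cqr]
    have hσm : sigma1 m = sigma1 (p ^ b) * (sigma1 (q ^ (k + β)) * sigma1 r) := by
      rw [hm, sigma1_mul (c2.pow_left b), sigma1_mul cqr2]
    have hlt := hn.2 m hm0 hmn
    refine absurd hlt (not_lt.mpr ?_)
    -- show (sigma1 n)/n ≤ (sigma1 m)/m
    have hnR : (0 : ℝ) < (n : ℝ) := by exact_mod_cast hn.1
    have hmR : (0 : ℝ) < (m : ℝ) := by exact_mod_cast hm0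
    rw [div_le_div_iff₀ hnR hmR]
    -- key inequality
    have hpR : (3 : ℝ) ≤ (p : ℝ) := by exact_mod_cast (by omega : 3 ≤ p)
    have hqR : (2 : ℝ) ≤ (q : ℝ) := by exact_mod_cast hq.two_le
    have hAp : ((q : ℝ)) ^ β ≤ (p : ℝ) - 1 := by
      have : (q : ℕ) ^ β + 1 ≤ p := hβp
      have := (Nat.cast_le (α := ℝ)).mpr this
      push_cast at this
      linarith
    have hBA : ((q : ℝ)) ^ (k + 1) ≤ ((q : ℝ)) ^ β :=
      pow_le_pow_right₀ (by linarith) hkβ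
    have hB2 : (2 : ℝ) ≤ ((q : ℝ)) ^ (k + 1) :=
      hqR.trans (le_self_pow₀ (by linarith) (Nat.succ_ne_zero k))
    have hPp : (p : ℝ) ≤ ((p : ℝ)) ^ (b + 1) :=
      le_self_pow₀ (by linarith) (Nat.succ_ne_zero b)
    have hcore := core_ineq ((q : ℝ) ^ β) ((q : ℝ) ^ (k + 1)) ((p : ℝ) ^ (b + 1)) (p : ℝ)
      hB2 hBA hAp hPp hpR
    have g1 := sigma1_geom hp (b + 1)
    have g2 := sigma1_geom hq k
    have g3 := sigma1_geom hp b
    have g4 := sigma1_geom hq (k + β)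
    have hpden : (0 : ℝ) < ((p : ℝ) - 1) * ((q : ℝ) - 1) := by nlinarith
    have key : (sigma1 (p ^ (b + 1)) : ℝ) * (sigma1 (q ^ k) : ℝ) * (q : ℝ) ^ β ≤
        (sigma1 (p ^ b) : ℝ) * (sigma1 (q ^ (k + β)) : ℝ) * (p : ℝ) := by
      rw [← mul_le_mul_iff_of_pos_right hpden]
      calc (sigma1 (p ^ (b + 1)) : ℝ) * (sigma1 (q ^ k) : ℝ) * (q : ℝ) ^ β
            * (((p : ℝ) - 1) * ((q : ℝ) - 1))
          = ((p : ℝ) ^ (b + 1) * (p : ℝ) - 1) * ((q : ℝ) ^ (k + 1) - 1) * (q : ℝ) ^ β := by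
            have e1 : (p : ℝ) ^ (b + 1) * (p : ℝ) = (p : ℝ) ^ (b + 1 + 1) := by ring
            rw [e1]
            linear_combination ((sigma1 (q ^ k) : ℝ) * ((q : ℝ) - 1) * (q : ℝ) ^ β) * g1 +
              (((p : ℝ) ^ (b + 1 + 1) - 1) * (q : ℝ) ^ β) * g2
        _ ≤ ((p : ℝ) ^ (b + 1) - 1) * ((q : ℝ) ^ β * (q : ℝ) ^ (k + 1) - 1) * (p : ℝ) := hcore
        _ = (sigma1 (p ^ b) : ℝ) * (sigma1 (q ^ (k + β)) : ℝ) * (p : ℝ)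
            * (((p : ℝ) - 1) * ((q : ℝ) - 1)) := by
            have e2 : (q : ℝ) ^ β * (q : ℝ) ^ (k + 1) = (q : ℝ) ^ (k + β + 1) := by
              rw [← pow_add]; ring_nf
            rw [e2]
            linear_combination (-((sigma1 (q ^ (k + β)) : ℝ) * ((q : ℝ) - 1) * (p : ℝ))) * g3 +
              (-(((p : ℝ) ^ (b + 1) - 1) * (p : ℝ))) * g4
    -- derive goal
    have hfac : (0 : ℝ) ≤ (sigma1 r : ℝ) * ((p : ℝ) ^ b * ((q : ℝ) ^ k * (r : ℝ))) := by
      positivity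
    have hmain := mul_le_mul_of_nonneg_right key hfac
    rw [hσn, hσm, hnval, hm]
    push_cast [pow_succ, pow_add]
    push_cast [pow_succ, pow_add] at hmain
    linarith [hmain]

lemma sigma_div_eq (n : ℕ) (hn : n ≠ 0) :
    (sigma1 n : ℝ) / n =
      (∏ q ∈ n.primeFactors, (1 - 1 / (q : ℝ) ^ (n.factorization q + 1))) *
        ((n : ℝ) / n.totient) := by
  have hσ : (sigma1 n : ℝ) = ∏ q ∈ n.primeFactors, (sigma1 (q ^ n.factorization q) : ℝ) := by
    rw [sigma1_factorization n hn]; push_cast; ring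
  have hnval : (n : ℝ) = ∏ q ∈ n.primeFactors, (q : ℝ) ^ n.factorization q := by
    conv_lhs => rw [← Nat.factorization_prod_pow_eq_self hn]
    rw [Nat.factorization_prod_pow_eq_self hn]
    conv_lhs => rw [← Nat.factorization_prod_pow_eq_self hn]
    rw [Finsupp.prod, Nat.support_factorization]
    push_cast; ring
  have hφ : (n.totient : ℝ) =
      ∏ q ∈ n.primeFactors, ((q : ℝ) ^ (n.factorization q - 1) * ((q : ℝ) - 1)) := by
    rw [Nat.totient_eq_prod_factorization hn, Finsupp.prod, Nat.support_factorization]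
    push_cast
    refine Finset.prod_congr rfl fun q hq => ?_
    have h1 : 1 ≤ q := (Nat.prime_of_mem_primeFactors hq).one_le
    push_cast [Nat.cast_sub h1]
    ring
  rw [hσ, hnval, hφ, ← Finset.prod_div_distrib, ← Finset.prod_div_distrib,
    ← Finset.prod_mul_distrib]
  refine Finset.prod_congr rfl fun q hq => ?_
  have hqp : q.Prime := Nat.prime_of_mem_primeFactors hq
  have hk1 : 1 ≤ n.factorization q := hqp.factorization_pos_of_dvd hn (Nat.dvd_of_mem_primeFactors hq)
  obtain ⟨j, hj⟩ : ∃ j, n.factorization q = j + 1 := ⟨n.factorization q - 1, by omega⟩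
  rw [hj]
  have hq2 : (2 : ℝ) ≤ (q : ℝ) := by exact_mod_cast hqp.two_le
  have hg := sigma1_geom hqp (j + 1)
  have hq0 : (q : ℝ) ≠ 0 := by linarith
  have hq1 : (q : ℝ) - 1 ≠ 0 := by linarith
  have hqpow : (q : ℝ) ^ (j + 1 + 1) ≠ 0 := pow_ne_zero _ hq0
  simp only [Nat.add_sub_cancel]
  rw [show (sigma1 (q ^ (j + 1)) : ℝ) = ((q : ℝ) ^ (j + 1 + 1) - 1) / ((q : ℝ) - 1) from by
    rw [eq_div_iff hq1]; exact hg]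
  field_simp
  ring


lemma one_sub_sum_le_prod {s : Finset ℕ} {g : ℕ → ℝ} (h0 : ∀ i ∈ s, 0 ≤ g i)
    (h1 : ∀ i ∈ s, g i ≤ 1) :
    1 - ∑ i ∈ s, g i ≤ ∏ i ∈ s, (1 - g i) := by
  classical
  induction s using Finset.cons_induction with
  | empty => simp
  | cons a s ha ih =>
    rw [Finset.prod_cons, Finset.sum_cons]
    have hsum : 0 ≤ ∑ i ∈ s, g i :=
      Finset.sum_nonneg fun i hi => h0 i (Finset.mem_cons_of_mem hi)
    have hga0 := h0 a (Finset.mem_cons_self a s)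
    have hga1 := h1 a (Finset.mem_cons_self a s)
    have ihs := ih (fun i hi => h0 i (Finset.mem_cons_of_mem hi))
      (fun i hi => h1 i (Finset.mem_cons_of_mem hi))
    have h2 := mul_le_mul_of_nonneg_left ihs (show (0:ℝ) ≤ 1 - g a by linarith)
    nlinarith [mul_nonneg hga0 hsum]

lemma log23_gt : (3 : ℝ) < Real.log 23 := by
  refine (Real.lt_log_iff_exp_lt (by norm_num : (0:ℝ) < 23)).mpr ?_
  have h1 : Real.exp 1 < 2.7182818286 := Real.exp_one_lt_d9
  have h3 : Real.exp 3 = Real.exp 1 ^ (3:ℕ) := by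
    rw [← Real.exp_nat_mul]; norm_num
  rw [h3]
  calc Real.exp 1 ^ (3:ℕ) < 2.7182818286 ^ (3:ℕ) :=
        pow_lt_pow_left₀ h1 (Real.exp_pos 1).le (by norm_num)
    _ < 23 := by norm_num

lemma poly_pos {L : ℝ} (hL : 3 ≤ L) :
    2 * L ^ 2 < (1 + L / 2 + L ^ 2 / 8 + L ^ 3 / 48) * (L + 1.5) := by
  have hv : 0 ≤ L - 3 := by linarith
  nlinarith [hv, sq_nonneg (L - 3), mul_nonneg hv (sq_nonneg (L - 3)),
    sq_nonneg ((L - 3) ^ 2), mul_nonneg (mul_nonneg hv hv) (mul_nonneg hv hv)]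

set_option maxHeartbeats 1000000 in
lemma prod_bound (p : ℕ) (hp23 : 23 ≤ p) (f : ℕ → ℕ)
    (hf : ∀ q : ℕ, q.Prime → q ≤ p → p < q ^ (f q + 1)) :
    1 - 1 / Real.log p * (1 + 1.5 / Real.log p) <
      ∏ q ∈ (Finset.range (p + 1)).filter Nat.Prime, (1 - 1 / (q : ℝ) ^ (f q + 1)) := by
  classical
  have hp0n : 0 < p := by omega
  have hp0 : (0:ℝ) < p := by exact_mod_cast hp0n
  set F := (Finset.range (p + 1)).filter Nat.Prime with hF
  set g : ℕ → ℝ := fun q => 1 / (q : ℝ) ^ (f q + 1) with hg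
  have hmem : ∀ q ∈ F, q.Prime ∧ q ≤ p := by
    intro q hq
    rw [hF, Finset.mem_filter, Finset.mem_range] at hq
    exact ⟨hq.2, by omega⟩
  have h0 : ∀ q ∈ F, 0 ≤ g q := by
    intro q hq; rw [hg]; positivity
  have h1 : ∀ q ∈ F, g q ≤ 1 := by
    intro q hq
    have h2 : (1:ℝ) ≤ (q : ℝ) ^ (f q + 1) := by
      have : (2:ℝ) ≤ (q:ℝ) := by exact_mod_cast (hmem q hq).1.two_le
      exact one_le_pow₀ (by linarith)
    rw [hg]
    exact div_le_one_of_le₀ h2 (by positivity)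
  have hprod := one_sub_sum_le_prod h0 h1
  -- now bound the sum
  set s := Nat.sqrt p with hs
  have hs4 : 4 ≤ s := Nat.le_sqrt.mpr (by omega)
  have hsp : s ≤ p := Nat.sqrt_le_self p
  have hsR : (4:ℝ) ≤ (s:ℝ) := by exact_mod_cast hs4
  have hsplit := Finset.sum_filter_add_sum_filter_not F (fun q => q ≤ s) g
  -- small primes
  have hsmall : ∑ q ∈ F.filter (fun q => q ≤ s), g q ≤ ((s:ℝ) - 1) * (1 / ((p:ℝ) + 1)) := by
    have hb : ∀ q ∈ F.filter (fun q => q ≤ s), g q ≤ 1 / ((p:ℝ) + 1) := by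
      intro q hq
      rw [Finset.mem_filter] at hq
      obtain ⟨hqF, _⟩ := hq
      obtain ⟨hqp, hqle⟩ := hmem q hqF
      have hpow : (p:ℕ) + 1 ≤ q ^ (f q + 1) := hf q hqp hqle
      have hpowR : ((p:ℝ) + 1) ≤ ((q:ℝ)) ^ (f q + 1) := by exact_mod_cast hpow
      rw [hg]
      exact one_div_le_one_div_of_le (by positivity) hpowR
    have hcard : (F.filter (fun q => q ≤ s)).card ≤ s - 1 := by
      have hsub : F.filter (fun q => q ≤ s) ⊆ Finset.Ioc 1 s := by
        intro q hq
        rw [Finset.mem_filter] at hq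
        rw [Finset.mem_Ioc]
        exact ⟨(hmem q hq.1).1.one_lt, hq.2⟩
      calc (F.filter (fun q => q ≤ s)).card ≤ (Finset.Ioc 1 s).card := Finset.card_le_card hsub
        _ = s - 1 := by rw [Nat.card_Ioc]
    have hsum := Finset.sum_le_card_nsmul _ _ _ hb
    have hcardR : ((F.filter (fun q => q ≤ s)).card : ℝ) ≤ (s:ℝ) - 1 := by
      have h2 : ((F.filter (fun q => q ≤ s)).card : ℝ) ≤ ((s - 1 : ℕ) : ℝ) := by
        exact_mod_cast hcard
      have h3 : ((s - 1 : ℕ) : ℝ) = (s:ℝ) - 1 := by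
        rw [Nat.cast_sub (by omega)]; norm_num
      linarith [h2, h3.le]
    rw [nsmul_eq_mul] at hsum
    calc ∑ q ∈ F.filter (fun q => q ≤ s), g q
        ≤ ((F.filter (fun q => q ≤ s)).card : ℝ) * (1 / ((p:ℝ) + 1)) := hsum
      _ ≤ ((s:ℝ) - 1) * (1 / ((p:ℝ) + 1)) := by
          apply mul_le_mul_of_nonneg_right hcardR (by positivity)
  -- large primes
  have hlarge : ∑ q ∈ F.filter (fun q => ¬ q ≤ s), g q ≤ (s:ℝ)⁻¹ - (p:ℝ)⁻¹ := by
    have hb : ∀ q ∈ F.filter (fun q => ¬ q ≤ s), g q ≤ ((q:ℝ) ^ 2)⁻¹ := by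
      intro q hq
      rw [Finset.mem_filter] at hq
      obtain ⟨hqF, hqs⟩ := hq
      obtain ⟨hqp, hqle⟩ := hmem q hqF
      have hf1 : 1 ≤ f q := by
        by_contra hc
        have hfq : f q = 0 := by omega
        have := hf q hqp hqle
        rw [hfq, pow_one] at this
        omega
      have hq1 : (1:ℝ) ≤ (q:ℝ) := by exact_mod_cast hqp.one_le
      have : ((q:ℝ)) ^ 2 ≤ ((q:ℝ)) ^ (f q + 1) := pow_le_pow_right₀ hq1 (by omega)
      rw [hg]
      simp only [one_div]
      exact inv_anti₀ (by positivity) this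
    have hsub : F.filter (fun q => ¬ q ≤ s) ⊆ Finset.Ioc s p := by
      intro q hq
      rw [Finset.mem_filter] at hq
      rw [Finset.mem_Ioc]
      exact ⟨by omega, (hmem q hq.1).2⟩
    calc ∑ q ∈ F.filter (fun q => ¬ q ≤ s), g q
        ≤ ∑ q ∈ F.filter (fun q => ¬ q ≤ s), ((q:ℝ) ^ 2)⁻¹ := Finset.sum_le_sum hb
      _ ≤ ∑ q ∈ Finset.Ioc s p, ((q:ℝ) ^ 2)⁻¹ :=
          Finset.sum_le_sum_of_subset_of_nonneg hsub (fun i _ _ => by positivity)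
      _ ≤ (s:ℝ)⁻¹ - (p:ℝ)⁻¹ := sum_Ioc_inv_sq_le_sub (by omega) hsp
  -- real sqrt comparison
  set x := Real.sqrt p with hx
  have hx0 : 0 < x := Real.sqrt_pos.mpr hp0
  have hx2 : x ^ 2 = (p:ℝ) := Real.sq_sqrt hp0.le
  have hsx : (s:ℝ) ≤ x := by
    have hss : s * s ≤ p := Nat.sqrt_le p
    have hssR : (s:ℝ) * (s:ℝ) ≤ (p:ℝ) := by exact_mod_cast hss
    nlinarith [hssR, hx2, hx0, sq_nonneg ((s:ℝ) - x)]
  have hx4 : 4 ≤ x := le_trans hsR hsx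
  have hxs1 : x < (s:ℝ) + 1 := by
    have hlt : p < (s + 1) * (s + 1) := Nat.lt_succ_sqrt p
    have hltR : (p:ℝ) < ((s:ℝ) + 1) * ((s:ℝ) + 1) := by exact_mod_cast hlt
    nlinarith [hx2, hltR, hx0, sq_nonneg (x - ((s:ℝ) + 1)), hsR]
  -- total sum bound: ≤ 2 / x
  have htot : ∑ q ∈ F, g q ≤ 2 / x := by
    have h1' : ((s:ℝ) - 1) * (1 / ((p:ℝ) + 1)) ≤ (x - 1) / x ^ 2 := by
      rw [mul_one_div]
      apply div_le_div₀ (by linarith) (by linarith) (by positivity) (by rw [hx2]; linarith)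
    have h2' : (s:ℝ)⁻¹ ≤ (x - 1)⁻¹ := by
      apply inv_anti₀ (by linarith) (by linarith)
    have h3' : (p:ℝ)⁻¹ = (x ^ 2)⁻¹ := by rw [hx2]
    have hkey : (x - 1) / x ^ 2 + (x - 1)⁻¹ - (x ^ 2)⁻¹ ≤ 2 / x := by
      have hxne : x ≠ 0 := ne_of_gt hx0
      have hx1ne : x - 1 ≠ 0 := by intro h; nlinarith
      have hd : 2 / x - ((x - 1) / x ^ 2 + (x - 1)⁻¹ - (x ^ 2)⁻¹) = (x - 2) / (x ^ 2 * (x - 1)) := by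
        field_simp
        ring
      have hnn : 0 ≤ (x - 2) / (x ^ 2 * (x - 1)) := by
        apply div_nonneg (by linarith)
        have : 0 < x - 1 := by linarith
        positivity
      linarith
    rw [← hsplit]
    calc ∑ q ∈ F.filter (fun q => q ≤ s), g q + ∑ q ∈ F.filter (fun q => ¬ q ≤ s), g q
        ≤ ((s:ℝ) - 1) * (1 / ((p:ℝ) + 1)) + ((s:ℝ)⁻¹ - (p:ℝ)⁻¹) := add_le_add hsmall hlarge
      _ ≤ (x - 1) / x ^ 2 + ((x - 1)⁻¹ - (x ^ 2)⁻¹) := by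
          rw [h3']
          exact add_le_add h1' (sub_le_sub h2' le_rfl)
      _ ≤ 2 / x := by linarith [hkey]
  -- log estimates
  set L := Real.log p with hL
  have hL3 : 3 < L := by
    have h23p : (23:ℝ) ≤ (p:ℝ) := by exact_mod_cast hp23
    have := Real.log_le_log (by norm_num : (0:ℝ) < 23) h23p
    linarith [log23_gt]
  have hxexp : Real.exp (L / 2) = x := by
    have hlogx : Real.log x = L / 2 := by
      have : L = Real.log (x ^ 2) := by rw [hx2]
      rw [Real.log_pow] at this
      push_cast at this
      linarith
    rw [← hlogx, Real.exp_log hx0]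
  have hexpge : 1 + L / 2 + L ^ 2 / 8 + L ^ 3 / 48 ≤ x := by
    have hnn : (0:ℝ) ≤ L / 2 := by linarith
    have hsum := Real.sum_le_exp_of_nonneg hnn 4
    rw [hxexp] at hsum
    have hev : ∑ i ∈ Finset.range 4, (L / 2) ^ i / (Nat.factorial i)
        = 1 + L / 2 + L ^ 2 / 8 + L ^ 3 / 48 := by
      rw [Finset.sum_range_succ, Finset.sum_range_succ, Finset.sum_range_succ,
        Finset.sum_range_one]
      norm_num [Nat.factorial]
      ring
    rw [hev] at hsum
    exact hsum
  have hfin : 2 / x < 1 / L * (1 + 1.5 / L) := by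
    have hL0 : (0:ℝ) < L := by linarith
    have hLne : L ≠ 0 := ne_of_gt hL0
    have hrhs : 1 / L * (1 + 1.5 / L) = (L + 1.5) / L ^ 2 := by
      rw [eq_div_iff (pow_ne_zero 2 hLne)]
      field_simp
    rw [hrhs, div_lt_div_iff₀ hx0 (by positivity)]
    have hpoly := poly_pos hL3.le
    nlinarith [hexpge, hpoly, hL3]
  have hsumlt : ∑ q ∈ F, g q < 1 / L * (1 + 1.5 / L) := lt_of_le_of_lt htot hfin
  calc 1 - 1 / L * (1 + 1.5 / L) < 1 - ∑ q ∈ F, g q := by linarith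
    _ ≤ ∏ q ∈ F, (1 - g q) := hprod


theorem superabundant_product_bound
    (n : ℕ) (hn : Superabundant n) (p : ℕ) (hp : p.Prime) (hpn : p ∣ n)
    (hmax : ∀ q : ℕ, q.Prime → q ∣ n → q ≤ p) (hp23 : 23 ≤ p) :
    (∏ q ∈ (Finset.range (p + 1)).filter Nat.Prime,
        (1 - 1 / (q : ℝ) ^ (n.factorization q + 1)) >
      1 - (1 / Real.log p) * (1 + 1.5 / Real.log p)) ∧
    (sigma1 n : ℝ) / n >
      (1 - (1 / Real.log p) * (1 + 1.5 / Real.log p)) * ((n : ℝ) / n.totient) := by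
  have hn0 : n ≠ 0 := hn.1.ne'
  have hstruct : ∀ q : ℕ, q.Prime → q ≤ p → p < q ^ (n.factorization q + 1) :=
    fun q hq hqp => sab_exponent n hn p hp hpn hp23 q hq hqp
  have hfirst := prod_bound p hp23 n.factorization hstruct
  have hFeq : (Finset.range (p + 1)).filter Nat.Prime = n.primeFactors := by
    ext q
    simp only [Finset.mem_filter, Finset.mem_range, Nat.mem_primeFactors]
    constructor
    · rintro ⟨hqr, hqp⟩
      refine ⟨hqp, ?_, hn0⟩
      by_contra hdvd
      have h := hstruct q hqp (by omega)
      rw [Nat.factorization_eq_zero_of_not_dvd hdvd, pow_one] at h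
      omega
    · rintro ⟨hqp, hdvd, _⟩
      exact ⟨by have := hmax q hqp hdvd; omega, hqp⟩
  constructor
  · exact hfirst
  · have hid := sigma_div_eq n hn0
    rw [← hFeq] at hid
    rw [gt_iff_lt, hid]
    have h1 : (0:ℝ) < (n:ℝ) := by exact_mod_cast hn.1
    have h2 : 0 < n.totient := Nat.totient_pos.mpr hn.1
    have h2' : (0:ℝ) < (n.totient:ℝ) := by exact_mod_cast h2
    have hpos : (0:ℝ) < (n:ℝ) / (n.totient:ℝ) := by positivity
    exact mul_lt_mul_of_pos_right hfirst hpos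

end
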